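/- Let $(e^{tA})_{t \ge 0}$ and $(e^{tB})_{t \ge 0}$ be real $C_0$-semigroups on a complex Banach lattice $E$ and let $u \ge 0$ be a quasi-interior point of $E$. Assume: (a) there exists $t_1 \ge 0$ such that $e^{t_1 A} E \subseteq E_u$; (b) for each $0 \lneq f \in E$ there exist $t_0 \ge 0$ and $c > 0$ with $e^{tB} f \ge c u$ for all $t \ge t_0$; (c) $e^{tA} f \to 0$ for every $f \in E$ as $t \to \infty$. Then for each nonzero $f \in E$, there exist $\tau \ge 0$ and $c' > 0$ such that $e^{tB}|f| - |e^{tA} f| \ge c' u$ for all $t \ge \tau$. In particular, $|e^{tA} f| \le e^{tB}|f|$ for all $t \ge \tau$. -/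

import Mathlib

open Filter Topology

/-- Membership in the principal ideal `E_u` generated by `u`. -/
def InPrincipalIdeal {E : Type*} [NormedAddCommGroup E] [Lattice E] [HasSolidNorm E] [IsOrderedAddMonoid E] [NormedSpace ℝ E]
    (u x : E) : Prop :=
  ∃ c : ℝ, 0 < c ∧ |x| ≤ c • u

section Aux

variable {E : Type*} [NormedAddCommGroup E] [Lattice E] [HasSolidNorm E] [IsOrderedAddMonoid E] [NormedSpace ℝ E]

private lemma pow_two_nsmul_semiclosed {a : E} : ∀ k : ℕ, 0 ≤ (2 ^ k : ℕ) • a → 0 ≤ a := by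
  intro k
  induction k generalizing a with
  | zero => simpa using id
  | succ k ih =>
      intro h
      apply nsmul_two_semiclosed
      apply ih
      rw [pow_succ', mul_nsmul] at h
      exact h

/-- Scalar multiplication by a nonnegative real preserves positivity. -/
private lemma abs_add'' (a b : E) : |a + b| ≤ |a| + |b| := by
  apply sup_le
  · exact add_le_add (le_abs_self a) (le_abs_self b)
  · rw [neg_add]
    exact add_le_add (neg_le_abs _) (neg_le_abs _)

private lemma smul_nonneg'' {c : ℝ} {x : E} (hc : 0 ≤ c) (hx : 0 ≤ x) : 0 ≤ c • x := by
  have hclosed : IsClosed {t : ℝ | 0 ≤ t • x} :=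
    isClosed_le continuous_const (continuous_id.smul continuous_const)
  have key : ∀ k : ℕ, ((⌊c * 2 ^ k⌋₊ : ℝ) / 2 ^ k) ∈ {t : ℝ | 0 ≤ t • x} := by
    intro k
    apply pow_two_nsmul_semiclosed k
    rw [← Nat.cast_smul_eq_nsmul ℝ, smul_smul]
    have h2 : ((2 ^ k : ℕ) : ℝ) * ((⌊c * 2 ^ k⌋₊ : ℝ) / 2 ^ k) = (⌊c * 2 ^ k⌋₊ : ℝ) := by
      push_cast
      field_simp
    rw [h2, Nat.cast_smul_eq_nsmul]
    exact nsmul_nonneg hx _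
  have hlim : Tendsto (fun k : ℕ => ((⌊c * 2 ^ k⌋₊ : ℝ) / 2 ^ k)) atTop (𝓝 c) := by
    have hup : ∀ k : ℕ, ((⌊c * 2 ^ k⌋₊ : ℝ) / 2 ^ k) ≤ c := by
      intro k
      rw [div_le_iff₀ (by positivity)]
      exact Nat.floor_le (by positivity)
    have hlow : ∀ k : ℕ, c - (1 / 2 : ℝ) ^ k ≤ ((⌊c * 2 ^ k⌋₊ : ℝ) / 2 ^ k) := by
      intro k
      have hfl := Nat.lt_floor_add_one (c * 2 ^ k)
      have hpow : ((1:ℝ)/2) ^ k = 1 / 2 ^ k := by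
        rw [div_pow, one_pow]
      rw [hpow, sub_le_iff_le_add, ← add_div, le_div_iff₀ (by positivity : (0:ℝ) < 2 ^ k)]
      linarith
    have h1 : Tendsto (fun k : ℕ => c - (1 / 2 : ℝ) ^ k) atTop (𝓝 (c - 0)) :=
      tendsto_const_nhds.sub
        (tendsto_pow_atTop_nhds_zero_of_lt_one (by norm_num) (by norm_num))
    rw [sub_zero] at h1
    exact tendsto_of_tendsto_of_tendsto_of_le_of_le h1 tendsto_const_nhds hlow hup
  exact hclosed.mem_of_tendsto hlim (Eventually.of_forall key)

private lemma smul_mono'' {c : ℝ} (hc : 0 ≤ c) {a b : E} (h : a ≤ b) : c • a ≤ c • b := by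
  have := smul_nonneg'' hc (sub_nonneg.2 h)
  rw [smul_sub] at this
  exact sub_nonneg.1 this

private lemma abs_smul_le'' {c : ℝ} (hc : 0 ≤ c) (x : E) : |c • x| ≤ c • |x| := by
  rw [abs_le']
  constructor
  · exact smul_mono'' hc (le_abs_self x)
  · rw [← smul_neg]
    exact smul_mono'' hc (neg_le_abs x)

/-- Uniform bound (closed graph / Baire category argument): if every `A g` lies in the
principal ideal of `u`, then the bound is uniform in `‖g‖`. -/
private lemma uniform_bound [CompleteSpace E] (u : E) (hu : 0 ≤ u) (A : E →L[ℝ] E)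
    (h : ∀ f : E, InPrincipalIdeal u (A f)) :
    ∃ M > (0:ℝ), ∀ g : E, |A g| ≤ (M * ‖g‖) • u := by
  have habs : Continuous fun g : E => |A g| := by
    have : (fun g : E => |A g|) = fun g : E => (A g) ⊔ (-(A g)) := rfl
    rw [this]
    exact A.continuous.sup A.continuous.neg
  set C : ℕ → Set E := fun n => {g : E | |A g| ≤ (n : ℝ) • u} with hC
  have hclosed : ∀ n, IsClosed (C n) := fun n =>
    isClosed_le habs continuous_const
  have hcover : ⋃ n, C n = Set.univ := by
    apply Set.eq_univ_of_forall
    intro g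
    obtain ⟨c, hc, hle⟩ := h g
    obtain ⟨n, hn⟩ := exists_nat_ge c
    refine Set.mem_iUnion.2 ⟨n, ?_⟩
    refine hle.trans ?_
    have : 0 ≤ ((n : ℝ) - c) • u := smul_nonneg'' (by linarith) hu
    rw [sub_smul] at this
    exact sub_nonneg.1 this
  obtain ⟨n, hn⟩ := nonempty_interior_of_iUnion_of_closed hclosed hcover
  obtain ⟨x0, hx0⟩ := hn
  obtain ⟨r, hr, hball⟩ := Metric.mem_nhds_iff.1 (mem_interior_iff_mem_nhds.1 hx0)
  refine ⟨(4 * ((n : ℝ) + 1)) / r, by positivity, fun g => ?_⟩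
  rcases eq_or_ne g 0 with rfl | hg
  · simp
  · have hgnorm : (0:ℝ) < ‖g‖ := norm_pos_iff.2 hg
    set s : ℝ := r / (2 * ‖g‖) with hs
    have hspos : 0 < s := by positivity
    have hnorm : ‖s • g‖ = r / 2 := by
      rw [norm_smul, Real.norm_eq_abs, abs_of_pos hspos, hs]
      field_simp
    have hmem : x0 + s • g ∈ C n := by
      apply hball
      have hd : dist (x0 + s • g) x0 = r / 2 := by
        rw [dist_eq_norm]
        simpa using hnorm
      rw [Metric.mem_ball, hd]
      linarith
    have hmem0 : x0 ∈ C n := hball (Metric.mem_ball_self hr)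
    have hAh : |A (s • g)| ≤ (2 * ((n : ℝ) + 1)) • u := by
      have heq : A (s • g) = A (x0 + s • g) - A x0 := by
        rw [map_add]; abel
      calc |A (s • g)| = |A (x0 + s • g) - A x0| := by rw [heq]
        _ ≤ |A (x0 + s • g)| + |A x0| := by
            have h := abs_add'' (A (x0 + s • g)) (-(A x0))
            rw [abs_neg] at h
            rw [sub_eq_add_neg]
            exact h
        _ ≤ (n : ℝ) • u + (n : ℝ) • u := add_le_add hmem hmem0
        _ ≤ (2 * ((n : ℝ) + 1)) • u := by
            rw [← add_smul]
            have : 0 ≤ (2 * ((n : ℝ) + 1) - ((n:ℝ) + (n:ℝ))) • u :=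
              smul_nonneg'' (by linarith) hu
            rw [sub_smul] at this
            exact sub_nonneg.1 this
    have hrec : A g = s⁻¹ • A (s • g) := by
      rw [map_smul, smul_smul, inv_mul_cancel₀ hspos.ne', one_smul]
    calc |A g| = |s⁻¹ • A (s • g)| := by rw [hrec]
      _ ≤ s⁻¹ • |A (s • g)| := abs_smul_le'' (inv_nonneg.2 hspos.le) _
      _ ≤ s⁻¹ • ((2 * ((n : ℝ) + 1)) • u) := smul_mono'' (inv_nonneg.2 hspos.le) hAh
      _ = ((4 * ((n : ℝ) + 1)) / r * ‖g‖) • u := by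
          rw [smul_smul]
          congr 1
          rw [hs]
          field_simp
          ring

end Aux

/-- Proposition 3.2: individual eventual domination of semigroups.  Here `T t = e^{tA}`
and `S t = e^{tB}` are (real) `C₀`-semigroups on a Banach lattice `E`. -/
theorem stmt7 {E : Type*} [NormedAddCommGroup E] [Lattice E] [HasSolidNorm E] [IsOrderedAddMonoid E] [NormedSpace ℝ E] [CompleteSpace E]
    (u : E) (hu : 0 ≤ u) (huq : Dense {x : E | InPrincipalIdeal u x})
    (T S : ℝ → E →L[ℝ] E)
    (hT0 : T 0 = 1) (hS0 : S 0 = 1)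
    (hTsemi : ∀ s t : ℝ, 0 ≤ s → 0 ≤ t → T (s + t) = (T s).comp (T t))
    (hSsemi : ∀ s t : ℝ, 0 ≤ s → 0 ≤ t → S (s + t) = (S s).comp (S t))
    (hTcont : ∀ f : E, ContinuousOn (fun t => T t f) (Set.Ici 0))
    (hScont : ∀ f : E, ContinuousOn (fun t => S t f) (Set.Ici 0))
    -- (a) smoothing: `e^{t₁ A} E ⊆ E_u` for some `t₁ ≥ 0`:
    (ha : ∃ t1 ≥ (0:ℝ), ∀ f : E, InPrincipalIdeal u (T t1 f))
    -- (b) individual eventual strong positivity of `(e^{tB})`: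
    (hb : ∀ f : E, 0 ≤ f → f ≠ 0 → ∃ t0 ≥ (0:ℝ), ∃ c > (0:ℝ), ∀ t ≥ t0, c • u ≤ S t f)
    -- (c) `(e^{tA})` converges strongly to `0`:
    (hc : ∀ f : E, Tendsto (fun t => T t f) atTop (𝓝 0)) :
    ∀ f : E, f ≠ 0 → ∃ τ ≥ (0:ℝ), ∃ c' > (0:ℝ), ∀ t ≥ τ,
      c' • u ≤ S t |f| - |T t f| ∧ |T t f| ≤ S t |f| := by
  intro f hf
  obtain ⟨t1, ht1, hT1⟩ := ha
  have habsf : |f| ≠ 0 := by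
    intro h
    apply hf
    have h1 : f ≤ 0 := (le_abs_self f).trans h.le
    have h2 : -f ≤ 0 := (neg_le_abs f).trans h.le
    have h3 : 0 ≤ f := by simpa using h2
    exact le_antisymm h1 h3
  obtain ⟨t0, ht0, c, hcpos, hS⟩ := hb |f| (abs_nonneg f) habsf
  obtain ⟨M, hM, hMle⟩ := uniform_bound u hu (T t1) hT1
  -- choose t2 such that ‖T t f‖ ≤ c/(2M) for all t ≥ t2
  have hε : (0:ℝ) < c / (2 * M) := by positivity
  have hev : ∀ᶠ t in atTop, ‖T t f‖ < c / (2 * M) := by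
    have := (hc f).eventually (Metric.ball_mem_nhds (0:E) hε)
    filter_upwards [this] with t ht
    simpa [dist_eq_norm] using ht
  obtain ⟨t2, ht2⟩ := eventually_atTop.1 hev
  set t2' : ℝ := max t2 0 with ht2'
  refine ⟨max t0 (t1 + t2'), le_trans ht0 (le_max_left _ _), c / 2, by positivity, fun t ht => ?_⟩
  have htt0 : t ≥ t0 := le_trans (le_max_left _ _) ht
  have htt1 : t - t1 ≥ t2' := by
    have := le_trans (le_max_right t0 (t1 + t2')) ht
    linarith
  have htt1' : 0 ≤ t - t1 := le_trans (le_max_right t2 0) htt1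
  -- the key smallness bound on |T t f|
  have hsplit : T t f = T t1 (T (t - t1) f) := by
    have := hTsemi t1 (t - t1) ht1 htt1'
    have h' : t1 + (t - t1) = t := by ring
    rw [h'] at this
    rw [this]
    rfl
  have hsmall : |T t f| ≤ (c / 2) • u := by
    rw [hsplit]
    refine (hMle _).trans ?_
    have hnorm : ‖T (t - t1) f‖ < c / (2 * M) :=
      ht2 (t - t1) (le_trans (le_max_left t2 0) htt1)
    have h1 : M * ‖T (t - t1) f‖ ≤ c / 2 := by
      rw [div_mul_eq_div_div] at hnorm
      have := (le_div_iff₀' hM).1 hnorm.le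
      linarith [this]
    have : 0 ≤ (c / 2 - M * ‖T (t - t1) f‖) • u :=
      smul_nonneg'' (by linarith) hu
    rw [sub_smul] at this
    exact sub_nonneg.1 this
  have hbig : c • u ≤ S t |f| := hS t htt0
  have hmain : (c / 2) • u ≤ S t |f| - |T t f| := by
    have := sub_le_sub hbig hsmall
    have heq : c • u - (c / 2) • u = (c / 2) • u := by
      rw [← sub_smul]; ring_nf
    rwa [heq] at this
  refine ⟨hmain, ?_⟩
  have h0 : (0:E) ≤ (c / 2) • u := smul_nonneg'' (by positivity) hu
  have := le_trans h0 hmain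
  exact sub_nonneg.1 this
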